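/- Let G be a split connected reductive group over the ring of integers of a number field K whose centre Z_G is a split torus, and let G^der be its derived group with finite centre of order n. Let U ⊆ G(A_K^∞) be a compact open subgroup containing the maximal compact subgroup of Z_G(A_K^∞), and let Γ^d = G^der(K) ∩ U and Γ̄ be the corresponding congruence subgroup of G^ad(K). Then the natural map f : Γ^d → Γ̄ has kernel of order dividing a power of n, and its image is a normal subgroup of Γ̄ with abelian quotient annihilated by n. -/

import Mathlib

open IsDedekindDomain

noncomputable section

variable (K : Type) [Field K] [NumberField K] (n : ℕ)

/-- The finite adele ring `𝔸_K^∞` of a number field. -/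
abbrev AdeleRg : Type := FiniteAdeleRing (NumberField.RingOfIntegers K) K

/-- The inclusion `GL_n(K) → GL_n(𝔸_K^∞)`. -/
def glInclusion : GL (Fin n) K →* GL (Fin n) (AdeleRg K) :=
  Units.map ((algebraMap K (AdeleRg K)).mapMatrix).toMonoidHom

/-- `PGL_n` of a commutative ring, as the quotient of `GL_n` by its centre. -/
abbrev PGLn (R : Type) [CommRing R] : Type :=
  GL (Fin n) R ⧸ Subgroup.center (GL (Fin n) R)

/-- The composite `SL_n(K) → GL_n(K) → PGL_n(K)` (the map `G^der(K) → G^ad(K)`). -/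
def slToPGL : Matrix.SpecialLinearGroup (Fin n) K →* PGLn n K :=
  (QuotientGroup.mk' (Subgroup.center (GL (Fin n) K))).comp
    Matrix.SpecialLinearGroup.toGL

/-! ### Auxiliary lemmas -/

section Aux

variable {R : Type*} [CommRing R] {m : Type*} [DecidableEq m] [Fintype m]

/-- A unit of the matrix ring whose underlying matrix is scalar lies in the centre of `GL`. -/
lemma aux_scalar_mem_center_GL (r : R) (x : GL m R)
    (hx : (x : Matrix m m R) = Matrix.scalar m r) :
    x ∈ Subgroup.center (GL m R) := by
  refine Subgroup.mem_center_iff.mpr fun B => Units.ext ?_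
  show (B : Matrix m m R) * (x : Matrix m m R) = (x : Matrix m m R) * (B : Matrix m m R)
  rw [hx]
  exact ((Matrix.scalar_commute r (Commute.all r) (B : Matrix m m R)).symm).eq

/-- Central elements of `GL` have scalar underlying matrix. -/
lemma aux_center_GL_is_scalar {x : GL m R} (hx : x ∈ Subgroup.center (GL m R)) :
    ∃ r : R, (x : Matrix m m R) = Matrix.scalar m r := by
  have h : ∀ t : Matrix.TransvectionStruct m R, Commute t.toMatrix (x : Matrix m m R) := by
    intro t
    have := Subgroup.mem_center_iff.mp hx
      ⟨t.toMatrix, t.inv.toMatrix, t.mul_inv, t.inv_mul⟩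
    exact congrArg Units.val this
  obtain ⟨r, hr⟩ := Matrix.mem_range_scalar_of_commute_transvectionStruct h
  exact ⟨r, hr.symm⟩

/-- The number of `k`-th roots of unity in a field divides `k`. -/
lemma aux_card_rootsOfUnity_dvd (L : Type*) [Field L] (k : ℕ) (hk : k ≠ 0) :
    Nat.card (rootsOfUnity k L) ∣ k := by
  haveI : NeZero k := ⟨hk⟩
  obtain ⟨g, hg⟩ := IsCyclic.exists_generator (α := rootsOfUnity k L)
  rw [← orderOf_eq_card_of_forall_mem_zpowers hg]
  apply orderOf_dvd_of_pow_eq_one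
  have h := (mem_rootsOfUnity k (g : Lˣ)).mp g.2
  apply Subtype.ext
  rw [SubmonoidClass.coe_pow, OneMemClass.coe_one]
  exact h

/-- Conjugation by `u * z` with `z` central equals conjugation by `u`. -/
lemma aux_conj_central {G : Type*} [Group G] {z : G} (hz : ∀ a, a * z = z * a) (u b : G) :
    (u * z) * b * (u * z)⁻¹ = u * b * u⁻¹ := by
  have h1 : z * b * z⁻¹ = b := by rw [← hz b, mul_inv_cancel_right]
  calc (u * z) * b * (u * z)⁻¹ = u * (z * b * z⁻¹) * u⁻¹ := by group
    _ = u * b * u⁻¹ := by rw [h1]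

/-- Commutators are unchanged by central perturbations. -/
lemma aux_central_commutator {G : Type*} [Group G] {z₁ z₂ : G}
    (h₁ : ∀ a, a * z₁ = z₁ * a) (h₂ : ∀ a, a * z₂ = z₂ * a) (u₁ u₂ : G) :
    (u₁ * z₁) * (u₂ * z₂) * (u₁ * z₁)⁻¹ * (u₂ * z₂)⁻¹ = u₁ * u₂ * u₁⁻¹ * u₂⁻¹ := by
  rw [aux_conj_central h₁ u₁ (u₂ * z₂)]
  have h3 : z₂ * u₁⁻¹ * z₂⁻¹ = u₁⁻¹ := by rw [← h₂ u₁⁻¹, mul_inv_cancel_right]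
  calc u₁ * (u₂ * z₂) * u₁⁻¹ * (u₂ * z₂)⁻¹
      = u₁ * u₂ * (z₂ * u₁⁻¹ * z₂⁻¹) * u₂⁻¹ := by group
    _ = u₁ * u₂ * u₁⁻¹ * u₂⁻¹ := by rw [h3]

/-- If `c ^ k` lies in a compact subgroup of a commutative topological group, then `c` lies in
a compact subgroup. -/
lemma aux_exists_compact_subgroup {G : Type*} [CommGroup G] [TopologicalSpace G]
    [IsTopologicalGroup G] {D : Subgroup G} (hD : IsCompact (D : Set G))
    {c : G} {k : ℕ} (hk : 0 < k) (hc : c ^ k ∈ D) :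
    ∃ W : Subgroup G, IsCompact (W : Set G) ∧ c ∈ W := by
  refine ⟨(Subgroup.closure {c} ⊔ D).topologicalClosure, ?_,
    Subgroup.le_topologicalClosure _
      (Subgroup.mem_sup_left (Subgroup.subset_closure (Set.mem_singleton c)))⟩
  have hF : IsCompact (⋃ i ∈ Finset.range k, (fun x => c ^ i * x) '' (D : Set G)) := by
    apply (Finset.range k).isCompact_biUnion
    intro i _
    exact hD.image (continuous_const.mul continuous_id)
  have hsub : ((Subgroup.closure {c} ⊔ D : Subgroup G) : Set G) ⊆
      ⋃ i ∈ Finset.range k, (fun x => c ^ i * x) '' (D : Set G) := by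
    intro x hx
    obtain ⟨y, hy, d, hd, rfl⟩ := Subgroup.mem_sup.mp hx
    obtain ⟨j, rfl⟩ := Subgroup.mem_closure_singleton.mp hy
    have hk' : (0 : ℤ) < (k : ℤ) := by exact_mod_cast hk
    have h1 : c ^ j = c ^ ((j % (k : ℤ)).toNat) * ((c ^ k) ^ (j / (k : ℤ)) : G) := by
      rw [← zpow_natCast c (j % (k : ℤ)).toNat,
        Int.toNat_of_nonneg (Int.emod_nonneg j hk'.ne'), ← zpow_natCast c k, ← zpow_mul,
        ← zpow_add]
      rw [Int.emod_add_mul_ediv j (k : ℤ)]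
    refine Set.mem_iUnion₂.mpr ⟨(j % (k : ℤ)).toNat, ?_, ?_⟩
    · simp only [Finset.mem_range]
      rw [Int.toNat_lt (Int.emod_nonneg j hk'.ne')]
      exact Int.emod_lt_of_pos j hk'
    · refine ⟨(c ^ k) ^ (j / (k : ℤ)) * d, D.mul_mem (D.zpow_mem hc _) hd, ?_⟩
      simp only
      rw [← mul_assoc, ← h1]
  have hclosed := Subgroup.topologicalClosure_coe (s := Subgroup.closure {c} ⊔ D)
  rw [hclosed]
  exact hF.closure.of_isClosed_subset isClosed_closure (closure_mono hsub)

end Aux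

/-- **Comparison of congruence subgroups of `G^der(K)` and `G^ad(K)`.**
This is the split reductive group statement instantiated for `G = GL_n` (whose centre is
the split torus `𝔾_m`, with `G^der = SL_n` having finite centre `μ_n` of order `n` and
`G^ad = PGL_n`).  Let `K` be a number field and `U ⊆ GL_n(𝔸_K^∞)` a compact open
subgroup containing the maximal compact subgroup of the centre (i.e. containing every
element of the centre lying in some compact subgroup).  Let `Γ^d = SL_n(K) ∩ U` and let
`Γ̄ = PGL_n(K) ∩ Ū` be the corresponding congruence subgroup of `PGL_n(K)`, where `Ū` is
the image of `U`.  Then the natural map `f : Γ^d → Γ̄` (induced by `slToPGL`) has kernel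
of order dividing a power of `n`, and its image is a normal subgroup of `Γ̄` with abelian
quotient annihilated by `n`.  (The true fact that `glInclusion` carries the centre into
the centre is recorded as the hypothesis `hcent`.) -/
theorem sl_to_pgl_congruence_subgroup_comparison
    (hn : 0 < n)
    (hcent : ∀ z ∈ Subgroup.center (GL (Fin n) K),
      glInclusion K n z ∈ Subgroup.center (GL (Fin n) (AdeleRg K)))
    (U : Subgroup (GL (Fin n) (AdeleRg K)))
    (hUopen : IsOpen (U : Set (GL (Fin n) (AdeleRg K))))
    (hUcompact : IsCompact (U : Set (GL (Fin n) (AdeleRg K))))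
    (hZU : ∀ z ∈ Subgroup.center (GL (Fin n) (AdeleRg K)),
      (∃ V : Subgroup (GL (Fin n) (AdeleRg K)),
        IsCompact (V : Set (GL (Fin n) (AdeleRg K))) ∧ z ∈ V) → z ∈ U) :
    letI Γd : Subgroup (Matrix.SpecialLinearGroup (Fin n) K) :=
      Subgroup.comap ((glInclusion K n).comp Matrix.SpecialLinearGroup.toGL) U
    letI Γbar : Subgroup (PGLn n K) :=
      Subgroup.comap
        (QuotientGroup.map _ _ (glInclusion K n)
          (fun z hz => Subgroup.mem_comap.mpr (hcent z hz)))
        (Subgroup.map (QuotientGroup.mk' (Subgroup.center (GL (Fin n) (AdeleRg K)))) U)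
    (∃ k : ℕ, Nat.card ↥(Γd ⊓ MonoidHom.ker (slToPGL K n)) ∣ n ^ k) ∧
    (∀ b ∈ Γbar, ∀ x ∈ Subgroup.map (slToPGL K n) Γd,
      b * x * b⁻¹ ∈ Subgroup.map (slToPGL K n) Γd) ∧
    (∀ b₁ ∈ Γbar, ∀ b₂ ∈ Γbar,
      b₁ * b₂ * b₁⁻¹ * b₂⁻¹ ∈ Subgroup.map (slToPGL K n) Γd) ∧
    (∀ b ∈ Γbar, b ^ n ∈ Subgroup.map (slToPGL K n) Γd) := by
  set Γd : Subgroup (Matrix.SpecialLinearGroup (Fin n) K) :=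
    Subgroup.comap ((glInclusion K n).comp Matrix.SpecialLinearGroup.toGL) U with hΓd
  set Γbar : Subgroup (PGLn n K) :=
    Subgroup.comap
      (QuotientGroup.map _ _ (glInclusion K n)
        (fun z hz => Subgroup.mem_comap.mpr (hcent z hz)))
      (Subgroup.map (QuotientGroup.mk' (Subgroup.center (GL (Fin n) (AdeleRg K)))) U) with hΓbar
  -- unfolding membership of `Γbar`
  have hbar : ∀ b ∈ Γbar, ∃ (g : GL (Fin n) K) (u z : GL (Fin n) (AdeleRg K)),
      u ∈ U ∧ z ∈ Subgroup.center (GL (Fin n) (AdeleRg K)) ∧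
      QuotientGroup.mk' (Subgroup.center (GL (Fin n) K)) g = b ∧
      glInclusion K n g = u * z := by
    intro b hb
    obtain ⟨g, rfl⟩ := QuotientGroup.mk'_surjective (Subgroup.center (GL (Fin n) K)) b
    have hb' := Subgroup.mem_comap.mp hb
    rw [QuotientGroup.map_mk'] at hb'
    obtain ⟨u, hu, huz⟩ := Subgroup.mem_map.mp hb'
    obtain ⟨z, hz, hzz⟩ := (QuotientGroup.mk'_eq_mk' _).mp huz
    exact ⟨g, u, z, hu, hz, rfl, hzz.symm⟩
  -- elements of `GL_n(K)` of determinant one lift to `SL_n(K)`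
  have exists_sl : ∀ g : GL (Fin n) K, Matrix.GeneralLinearGroup.det g = 1 →
      ∃ t : Matrix.SpecialLinearGroup (Fin n) K, Matrix.SpecialLinearGroup.toGL t = g := by
    intro g hg
    refine ⟨⟨(g : Matrix (Fin n) (Fin n) K), ?_⟩, Units.ext rfl⟩
    exact congrArg Units.val hg
  refine ⟨?_, ?_, ?_, ?_⟩
  · -- the kernel has order dividing `n`
    refine ⟨1, ?_⟩
    rw [pow_one]
    have hle : Γd ⊓ MonoidHom.ker (slToPGL K n) ≤
        Subgroup.center (Matrix.SpecialLinearGroup (Fin n) K) := by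
      intro s hs
      have hker : s ∈ MonoidHom.ker (slToPGL K n) := hs.2
      rw [MonoidHom.mem_ker] at hker
      have h : Matrix.SpecialLinearGroup.toGL s ∈ Subgroup.center (GL (Fin n) K) :=
        (QuotientGroup.eq_one_iff _).mp hker
      refine Subgroup.mem_center_iff.mpr fun t => ?_
      have h2 := Subgroup.mem_center_iff.mp h (Matrix.SpecialLinearGroup.toGL t)
      have h3 := congrArg Units.val h2
      exact Subtype.ext h3
    calc Nat.card ↥(Γd ⊓ MonoidHom.ker (slToPGL K n))
        ∣ Nat.card ↥(Subgroup.center (Matrix.SpecialLinearGroup (Fin n) K)) :=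
          Subgroup.card_dvd_of_le hle
      _ = Nat.card (rootsOfUnity (Fintype.card (Fin n)) K) :=
          Nat.card_congr (Matrix.SpecialLinearGroup.center_equiv_rootsOfUnity'
            (⟨0, hn⟩ : Fin n)).toEquiv
      _ ∣ n := by rw [Fintype.card_fin]; exact aux_card_rootsOfUnity_dvd K n hn.ne'
  · -- conjugation stability
    intro b hb x hx
    obtain ⟨g, u, z, hu, hz, hgb, hguz⟩ := hbar b hb
    obtain ⟨s, hs, rfl⟩ := Subgroup.mem_map.mp hx
    have hS : glInclusion K n (Matrix.SpecialLinearGroup.toGL s) ∈ U := Subgroup.mem_comap.mp hs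
    obtain ⟨t, ht⟩ := exists_sl (g * Matrix.SpecialLinearGroup.toGL s * g⁻¹) (by
      simp [map_mul, map_inv, mul_comm])
    refine Subgroup.mem_map.mpr ⟨t, Subgroup.mem_comap.mpr ?_, ?_⟩
    · show glInclusion K n (Matrix.SpecialLinearGroup.toGL t) ∈ U
      rw [ht, map_mul, map_mul, map_inv, hguz]
      rw [aux_conj_central (fun a => Subgroup.mem_center_iff.mp hz a) u _]
      exact U.mul_mem (U.mul_mem hu hS) (U.inv_mem hu)
    · show QuotientGroup.mk' (Subgroup.center (GL (Fin n) K))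
        (Matrix.SpecialLinearGroup.toGL t) = b * slToPGL K n s * b⁻¹
      rw [ht, map_mul, map_mul, map_inv, hgb]
      rfl
  · -- commutators
    intro b₁ hb₁ b₂ hb₂
    obtain ⟨g₁, u₁, z₁, hu₁, hz₁, hgb₁, hguz₁⟩ := hbar b₁ hb₁
    obtain ⟨g₂, u₂, z₂, hu₂, hz₂, hgb₂, hguz₂⟩ := hbar b₂ hb₂
    obtain ⟨t, ht⟩ := exists_sl (g₁ * g₂ * g₁⁻¹ * g₂⁻¹) (by
      simp only [map_mul, map_inv]
      rw [mul_comm (Matrix.GeneralLinearGroup.det g₁) (Matrix.GeneralLinearGroup.det g₂)]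
      group)
    refine Subgroup.mem_map.mpr ⟨t, Subgroup.mem_comap.mpr ?_, ?_⟩
    · show glInclusion K n (Matrix.SpecialLinearGroup.toGL t) ∈ U
      rw [ht, map_mul, map_mul, map_mul, map_inv, map_inv, hguz₁, hguz₂]
      rw [aux_central_commutator (fun a => Subgroup.mem_center_iff.mp hz₁ a)
        (fun a => Subgroup.mem_center_iff.mp hz₂ a) u₁ u₂]
      exact U.mul_mem (U.mul_mem (U.mul_mem hu₁ hu₂) (U.inv_mem hu₁)) (U.inv_mem hu₂)
    · show QuotientGroup.mk' (Subgroup.center (GL (Fin n) K))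
        (Matrix.SpecialLinearGroup.toGL t) = b₁ * b₂ * b₁⁻¹ * b₂⁻¹
      rw [ht, map_mul, map_mul, map_mul, map_inv, map_inv, hgb₁, hgb₂]
  · -- `n`-th powers
    intro b hb
    obtain ⟨g, u, z, hu, hz, hgb, hguz⟩ := hbar b hb
    set d : Kˣ := Matrix.GeneralLinearGroup.det g with hd
    set ζ : GL (Fin n) K :=
      Units.map (Matrix.scalar (Fin n)).toMonoidHom d⁻¹ with hζ
    have hζc : ζ ∈ Subgroup.center (GL (Fin n) K) :=
      aux_scalar_mem_center_GL ((d⁻¹ : Kˣ) : K) ζ rfl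
    have hdetζ : Matrix.GeneralLinearGroup.det ζ = d⁻¹ ^ n := by
      apply Units.ext
      show (Matrix.scalar (Fin n) ((d⁻¹ : Kˣ) : K)).det = (((d⁻¹ : Kˣ) ^ n : Kˣ) : K)
      rw [Matrix.scalar_apply, Matrix.det_diagonal]
      simp
    have hdet : Matrix.GeneralLinearGroup.det (g ^ n * ζ) = 1 := by
      rw [map_mul, map_pow, hdetζ, ← hd, ← mul_pow, mul_inv_cancel, one_pow]
    obtain ⟨s, hsg⟩ := exists_sl (g ^ n * ζ) hdet
    -- the image of `s` in `PGL_n(K)` is `b ^ n`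
    have hmk : slToPGL K n s = b ^ n := by
      show QuotientGroup.mk' (Subgroup.center (GL (Fin n) K))
        (Matrix.SpecialLinearGroup.toGL s) = b ^ n
      rw [hsg, map_mul, map_pow, hgb]
      have h1 : QuotientGroup.mk' (Subgroup.center (GL (Fin n) K)) ζ = 1 :=
        (QuotientGroup.eq_one_iff _).mpr hζc
      rw [h1, mul_one]
    -- adelic computation
    have hcomm : Commute u z := Subgroup.mem_center_iff.mp hz u
    set w : GL (Fin n) (AdeleRg K) := z ^ n * glInclusion K n ζ with hw
    have hwc : w ∈ Subgroup.center (GL (Fin n) (AdeleRg K)) :=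
      Subgroup.mul_mem _ (Subgroup.pow_mem _ hz n) (hcent ζ hζc)
    have hSw : glInclusion K n (Matrix.SpecialLinearGroup.toGL s) = u ^ n * w := by
      rw [hsg, map_mul, map_pow, hguz, hcomm.mul_pow, hw, mul_assoc]
    -- `w` is scalar
    obtain ⟨c₀, hc₀⟩ := aux_center_GL_is_scalar hwc
    have i0 : Fin n := ⟨0, hn⟩
    have hunit : IsUnit c₀ := by
      have h1 : (w : Matrix (Fin n) (Fin n) (AdeleRg K)) *
          ((w⁻¹ : GL (Fin n) (AdeleRg K)) : Matrix (Fin n) (Fin n) (AdeleRg K)) = 1 := by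
        rw [← Units.val_mul, mul_inv_cancel, Units.val_one]
      rw [hc₀] at h1
      refine IsUnit.of_mul_eq_one (a := c₀)
        (((w⁻¹ : GL (Fin n) (AdeleRg K)) : Matrix (Fin n) (Fin n) (AdeleRg K)) i0 i0) ?_
      have h2 := congrFun (congrFun h1 i0) i0
      rw [Matrix.scalar_apply] at h2
      rw [Matrix.diagonal_mul] at h2
      simpa using h2
    set c : (AdeleRg K)ˣ := hunit.unit with hc
    -- scalar embedding
    set ψ : (AdeleRg K)ˣ →* GL (Fin n) (AdeleRg K) :=
      Units.map (Matrix.scalar (Fin n)).toMonoidHom with hψ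
    have hψw : ψ c = w := by
      apply Units.ext
      show Matrix.scalar (Fin n) ((c : (AdeleRg K)ˣ) : AdeleRg K) = _
      rw [hc, IsUnit.unit_spec, hc₀]
    -- determinant computations
    have hcont_det : Continuous (Matrix.GeneralLinearGroup.det :
        GL (Fin n) (AdeleRg K) → (AdeleRg K)ˣ) := by
      rw [Units.continuous_iff]
      constructor
      · exact Continuous.matrix_det Units.continuous_val
      · show Continuous fun g : GL (Fin n) (AdeleRg K) =>
          ((g⁻¹ : GL (Fin n) (AdeleRg K)) : Matrix (Fin n) (Fin n) (AdeleRg K)).det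
        exact Continuous.matrix_det (Units.continuous_val.comp continuous_inv)
    set D : Subgroup (AdeleRg K)ˣ :=
      Subgroup.map (Matrix.GeneralLinearGroup.det) U with hD
    have hDc : IsCompact (D : Set (AdeleRg K)ˣ) := by
      rw [hD, Subgroup.coe_map]
      exact hUcompact.image hcont_det
    have hdetw : Matrix.GeneralLinearGroup.det w = c ^ n := by
      apply Units.ext
      show ((w : Matrix (Fin n) (Fin n) (AdeleRg K))).det = _
      rw [hc₀, Matrix.scalar_apply, Matrix.det_diagonal]
      simp [hc, IsUnit.unit_spec]
    have hdetS : Matrix.GeneralLinearGroup.det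
        (glInclusion K n (Matrix.SpecialLinearGroup.toGL s)) = 1 := by
      apply Units.ext
      show ((algebraMap K (AdeleRg K)).mapMatrix
        (s : Matrix (Fin n) (Fin n) K)).det = 1
      rw [← RingHom.map_det]
      rw [s.prop]
      exact map_one _
    have hcn : c ^ n ∈ D := by
      have h1 : Matrix.GeneralLinearGroup.det u ∈ D :=
        Subgroup.mem_map.mpr ⟨u, hu, rfl⟩
      have h2 : (Matrix.GeneralLinearGroup.det u) ^ n * c ^ n = 1 := by
        rw [← hdetw, ← map_pow, ← map_mul, ← hSw, hdetS]
      have h3 : c ^ n = ((Matrix.GeneralLinearGroup.det u) ^ n)⁻¹ := by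
        rw [eq_inv_iff_mul_eq_one, mul_comm]
        exact h2
      rw [h3]
      exact D.inv_mem (D.pow_mem h1 n)
    obtain ⟨W, hWc, hcW⟩ := aux_exists_compact_subgroup hDc hn hcn
    -- push `W` into `GL_n` along the scalar embedding
    have hcontψ : Continuous ψ := by
      apply Continuous.units_map
      show Continuous fun r : AdeleRg K => Matrix.scalar (Fin n) r
      simp only [Matrix.scalar_apply]
      exact Continuous.matrix_diagonal (continuous_pi fun _ => continuous_id)
    have hwU : w ∈ U := by
      refine hZU w hwc ⟨Subgroup.map ψ W, ?_, Subgroup.mem_map.mpr ⟨c, hcW, hψw⟩⟩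
      rw [Subgroup.coe_map]
      exact hWc.image hcontψ
    refine Subgroup.mem_map.mpr ⟨s, Subgroup.mem_comap.mpr ?_, hmk⟩
    show glInclusion K n (Matrix.SpecialLinearGroup.toGL s) ∈ U
    rw [hSw]
    exact U.mul_mem (U.pow_mem hu n) hwU

end
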